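/- Let X^n be a process over a finite alphabet and Z^n be its output through a discrete memoryless channel with matrix Π. Then for each t and each sequence z^t with positive probability, P_{X_t|Z^t=z^t} = (Π(·, z_t) ⊙ (Π^{-T} P_{Z_t|Z^{t-1}=z^{t-1}})) / P(Z_t = z_t | Z^{t-1} = z^{t-1}). -/

import Mathlib

open Finset Matrix
open scoped Classical

noncomputable section

/-- Joint law of `(X^n, Z^n)` when the source has law `pX` and the channel is a
DMC with matrix `K` (`K x z = P(Z_t = z | X_t = x)`). -/
def dmcJoint {n : ℕ} {α : Type} [Fintype α]
    (pX : (Fin n → α) → ℝ) (K : Matrix α α ℝ) (x z : Fin n → α) : ℝ :=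
  pX x * ∏ t, K (x t) (z t)

/-- Marginal law of `Z^n`. -/
def zMarg {n : ℕ} {α : Type} [Fintype α]
    (pX : (Fin n → α) → ℝ) (K : Matrix α α ℝ) (z : Fin n → α) : ℝ :=
  ∑ x : Fin n → α, dmcJoint pX K x z

/-- Probability of an event under the joint law. -/
def probE {n : ℕ} {α : Type} [Fintype α]
    (pX : (Fin n → α) → ℝ) (K : Matrix α α ℝ)
    (E : (Fin n → α) → (Fin n → α) → Prop) : ℝ :=
  ∑ x : Fin n → α, ∑ z : Fin n → α, if E x z then dmcJoint pX K x z else 0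

/-- Conditional law, under the joint law `Q` of a `Z`-sequence, of the `t`-th
coordinate given the coordinates `s` with `s + d ≤ t` (i.e. given `Z^{t-d}`;
`d = 1` is the causal conditional given `Z^{t-1}`). -/
def condDelay {n : ℕ} {α : Type} [Fintype α]
    (Q : (Fin n → α) → ℝ) (d : ℕ) (t : Fin n) (z : Fin n → α) (b : α) : ℝ :=
  (∑ z' : Fin n → α,
      if (∀ s : Fin n, (s : ℕ) + d ≤ (t : ℕ) → z' s = z s) ∧ z' t = b
      then Q z' else 0) /
  (∑ z' : Fin n → α,
      if ∀ s : Fin n, (s : ℕ) + d ≤ (t : ℕ) → z' s = z s then Q z' else 0)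

/-- KL divergence between two distributions on a finite type. -/
def klDiv {β : Type} [Fintype β] (P Q : β → ℝ) : ℝ :=
  ∑ b, P b * Real.log (P b / Q b)

/-- Maximal absolute entry of a matrix. -/
def matMaxAbs {α : Type} [Fintype α] [Nonempty α] (M : Matrix α α ℝ) : ℝ :=
  ⨆ p : α × α, |M p.1 p.2|

/-- The filter `X̂_B(F(q, K, z_t))`, i.e. the Bayes response (computed by `XB`)
to `K(·, z_t) ⊙ (K^{-T} q)`, which is `P_{X_t | ⋯}` up to positive
normalization. -/
def hadFilter {α : Type} [Fintype α]
    (K : Matrix α α ℝ) (XB : (α → ℝ) → α) (q : α → ℝ) (zt : α) : α :=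
  XB (fun a => K a zt * Matrix.mulVec (K⁻¹)ᵀ q a)

/-- For a process `X^n` through a DMC with invertible matrix `K`,
for each `t` and each sequence `z^t` of positive probability,
`P_{X_t|Z^t=z^t} = (K(·, z_t) ⊙ (K^{-T} P_{Z_t|Z^{t-1}=z^{t-1}})) / P(Z_t = z_t | Z^{t-1} = z^{t-1})`. -/
lemma sum_prod_fixed {n : ℕ} {α : Type} [Fintype α]
    (h : Fin n → α → ℝ) (hrow : ∀ s, ∑ b, h s b = 1)
    (T : Finset (Fin n)) (g : Fin n → α) :
    (∑ f : Fin n → α, if ∀ s ∈ T, f s = g s then ∏ s, h s (f s) else 0)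
      = ∏ s ∈ T, h s (g s) := by
  classical
  have key : ∀ f : Fin n → α,
      (if ∀ s ∈ T, f s = g s then ∏ s, h s (f s) else 0)
        = ∏ s, (if s ∈ T then (if f s = g s then h s (f s) else 0) else h s (f s)) := by
    intro f
    by_cases hf : ∀ s ∈ T, f s = g s
    · rw [if_pos hf]
      refine Finset.prod_congr rfl fun s _ => ?_
      by_cases hs : s ∈ T
      · simp [hs, hf s hs]
      · simp [hs]
    · rw [if_neg hf]
      push_neg at hf
      obtain ⟨s, hsT, hsne⟩ := hf
      exact (Finset.prod_eq_zero (Finset.mem_univ s) (by simp [hsT, hsne])).symm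
  simp_rw [key]
  have hps := (Fintype.prod_sum (fun (s : Fin n) (b : α) =>
      if s ∈ T then (if b = g s then h s b else 0) else h s b)).symm
  rw [hps]
  have hcol : ∀ s : Fin n,
      (∑ b, if s ∈ T then (if b = g s then h s b else 0) else h s b)
        = if s ∈ T then h s (g s) else 1 := by
    intro s
    by_cases hs : s ∈ T <;> simp [hs, hrow s]
  simp_rw [hcol]
  rw [Finset.prod_ite_mem, Finset.univ_inter]

theorem conditional_given_causal_observations
    {n : ℕ} {α : Type} [Fintype α] [Nonempty α]
    (pX : (Fin n → α) → ℝ) (hpX0 : ∀ x, 0 ≤ pX x) (hpX1 : ∑ x, pX x = 1)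
    (K : Matrix α α ℝ) (hK0 : ∀ a b, 0 ≤ K a b) (hKrow : ∀ a, ∑ b, K a b = 1)
    (hKdet : IsUnit K.det)
    (t : Fin n) (z : Fin n → α)
    (hpos : 0 < probE pX K (fun _ z' => ∀ s : Fin n, (s : ℕ) ≤ (t : ℕ) → z' s = z s))
    (a : α) :
    probE pX K (fun x' z' => x' t = a ∧ ∀ s : Fin n, (s : ℕ) ≤ (t : ℕ) → z' s = z s) /
        probE pX K (fun _ z' => ∀ s : Fin n, (s : ℕ) ≤ (t : ℕ) → z' s = z s)
      = K a (z t) * Matrix.mulVec (K⁻¹)ᵀ (condDelay (zMarg pX K) 1 t z) a /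
          condDelay (zMarg pX K) 1 t z (z t) := by
  classical
  set T₀ : Finset (Fin n) := Finset.univ.filter (fun s : Fin n => (s : ℕ) < (t : ℕ)) with hT₀
  have hmemT₀ : ∀ s : Fin n, s ∈ T₀ ↔ (s : ℕ) < (t : ℕ) := by
    intro s; simp [hT₀]
  have htT₀ : t ∉ T₀ := by simp [hmemT₀]
  have hneT₀ : ∀ s ∈ T₀, s ≠ t := by
    intro s hs h
    exact absurd ((hmemT₀ s).mp hs) (by simp [h])
  set P : (Fin n → α) → ℝ := fun x => ∏ s ∈ T₀, K (x s) (z s) with hP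
  set w : α → ℝ := fun c => ∑ x : Fin n → α, if x t = c then pX x * P x else 0 with hw
  have hP0 : ∀ x, 0 ≤ P x := fun x => Finset.prod_nonneg fun s _ => hK0 _ _
  have hw0 : ∀ c, 0 ≤ w c := by
    intro c
    refine Finset.sum_nonneg fun x _ => ?_
    split
    · exact mul_nonneg (hpX0 x) (hP0 x)
    · exact le_refl 0
  -- summing the joint over z' constrained on a finite set of coordinates
  have hzsum1 : ∀ (T : Finset (Fin n)) (g : Fin n → α) (x : Fin n → α),
      (∑ z' : Fin n → α, if ∀ s ∈ T, z' s = g s then dmcJoint pX K x z' else 0)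
        = pX x * ∏ s ∈ T, K (x s) (g s) := by
    intro T g x
    have : ∀ z' : Fin n → α,
        (if ∀ s ∈ T, z' s = g s then dmcJoint pX K x z' else 0)
          = pX x * (if ∀ s ∈ T, z' s = g s then ∏ s, K (x s) (z' s) else 0) := by
      intro z'
      rw [dmcJoint]
      split <;> simp
    simp_rw [this, ← Finset.mul_sum]
    rw [sum_prod_fixed (fun s b => K (x s) b) (fun s => hKrow (x s)) T g]
  have hzsum : ∀ (T : Finset (Fin n)) (g : Fin n → α),
      (∑ z' : Fin n → α, if ∀ s ∈ T, z' s = g s then zMarg pX K z' else 0)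
        = ∑ x : Fin n → α, pX x * ∏ s ∈ T, K (x s) (g s) := by
    intro T g
    have : ∀ z' : Fin n → α,
        (if ∀ s ∈ T, z' s = g s then zMarg pX K z' else 0)
          = ∑ x : Fin n → α, if ∀ s ∈ T, z' s = g s then dmcJoint pX K x z' else 0 := by
      intro z'
      rw [zMarg]
      split <;> simp
    simp_rw [this]
    rw [Finset.sum_comm]
    exact Finset.sum_congr rfl fun x _ => hzsum1 T g x
  -- splitting a sum over x by the value of x t
  have hsplit : ∀ v : α → ℝ,
      (∑ x : Fin n → α, pX x * (v (x t) * P x)) = ∑ c, w c * v c := by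
    intro v
    simp_rw [hw, Finset.sum_mul, ite_mul, zero_mul]
    rw [Finset.sum_comm]
    refine Finset.sum_congr rfl fun x _ => ?_
    rw [Finset.sum_ite_eq Finset.univ (x t) (fun c => pX x * P x * v c)]
    simp [mul_comm, mul_left_comm]
  -- condition equivalences
  have hiff1 : ∀ z' : Fin n → α,
      (∀ s : Fin n, (s : ℕ) + 1 ≤ (t : ℕ) → z' s = z s) ↔ (∀ s ∈ T₀, z' s = z s) := by
    intro z'
    constructor
    · intro h s hs
      exact h s ((hmemT₀ s).mp hs)
    · intro h s hs
      exact h s ((hmemT₀ s).mpr hs)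
  have hiffb : ∀ (b : α) (z' : Fin n → α),
      ((∀ s : Fin n, (s : ℕ) + 1 ≤ (t : ℕ) → z' s = z s) ∧ z' t = b)
        ↔ (∀ s ∈ insert t T₀, z' s = Function.update z t b s) := by
    intro b z'
    constructor
    · rintro ⟨h1, h2⟩ s hs
      rcases Finset.mem_insert.mp hs with rfl | hs
      · simpa using h2
      · rw [Function.update_of_ne (hneT₀ s hs)]
        exact h1 s ((hmemT₀ s).mp hs)
    · intro h
      constructor
      · intro s hs
        have hsT : s ∈ T₀ := (hmemT₀ s).mpr hs
        have := h s (Finset.mem_insert_of_mem hsT)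
        rwa [Function.update_of_ne (hneT₀ s hsT)] at this
      · simpa using h t (Finset.mem_insert_self _ _)
  have hiffle : ∀ z' : Fin n → α,
      (∀ s : Fin n, (s : ℕ) ≤ (t : ℕ) → z' s = z s) ↔ (∀ s ∈ insert t T₀, z' s = z s) := by
    intro z'
    constructor
    · intro h s hs
      rcases Finset.mem_insert.mp hs with rfl | hs
      · exact h s le_rfl
      · exact h s (le_of_lt ((hmemT₀ s).mp hs))
    · intro h s hs
      rcases lt_or_eq_of_le hs with hlt | heq
      · exact h s (Finset.mem_insert_of_mem ((hmemT₀ s).mpr hlt))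
      · have : s = t := Fin.ext heq
        subst this
        exact h s (Finset.mem_insert_self _ _)
  -- product over insert t T₀ with updated pattern
  have hprodins : ∀ (x : Fin n → α) (b : α),
      (∏ s ∈ insert t T₀, K (x s) (Function.update z t b s)) = K (x t) b * P x := by
    intro x b
    rw [Finset.prod_insert htT₀, Function.update_self]
    congr 1
    exact Finset.prod_congr rfl fun s hs => by rw [Function.update_of_ne (hneT₀ s hs)]
  -- numerator of condDelay
  have hN : ∀ b : α,
      (∑ z' : Fin n → α,
        if (∀ s : Fin n, (s : ℕ) + 1 ≤ (t : ℕ) → z' s = z s) ∧ z' t = b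
        then zMarg pX K z' else 0) = ∑ c, w c * K c b := by
    intro b
    simp_rw [hiffb b]
    rw [hzsum (insert t T₀) (Function.update z t b)]
    simp_rw [hprodins]
    exact hsplit (fun c => K c b)
  -- denominator of condDelay
  have hD : (∑ z' : Fin n → α,
      if ∀ s : Fin n, (s : ℕ) + 1 ≤ (t : ℕ) → z' s = z s then zMarg pX K z' else 0)
        = ∑ c, w c := by
    simp_rw [hiff1]
    rw [hzsum T₀ z]
    have := hsplit (fun _ => 1)
    simpa using this
  -- probE of z-only events
  have hprobz : ∀ c : (Fin n → α) → Prop,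
      probE pX K (fun _ z' => c z')
        = ∑ z' : Fin n → α, if c z' then zMarg pX K z' else 0 := by
    intro c
    rw [probE, Finset.sum_comm]
    refine Finset.sum_congr rfl fun z' _ => ?_
    rw [zMarg]
    split <;> simp
  -- the denominator on the LHS
  have hcondle : ∀ z' : Fin n → α,
      (∀ s : Fin n, (s : ℕ) ≤ (t : ℕ) → z' s = z s)
        ↔ ((∀ s : Fin n, (s : ℕ) + 1 ≤ (t : ℕ) → z' s = z s) ∧ z' t = z t) := by
    intro z'
    rw [hiffle z', hiffb (z t) z', Function.update_eq_self]
  have hDen : probE pX K (fun _ z' => ∀ s : Fin n, (s : ℕ) ≤ (t : ℕ) → z' s = z s)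
      = ∑ c, w c * K c (z t) := by
    rw [hprobz]
    simp_rw [hcondle]
    exact hN (z t)
  -- the numerator on the LHS
  have hNum : probE pX K
      (fun x' z' => x' t = a ∧ ∀ s : Fin n, (s : ℕ) ≤ (t : ℕ) → z' s = z s)
        = w a * K a (z t) := by
    simp only [probE]
    have hx : ∀ x : Fin n → α,
        (∑ z' : Fin n → α,
          if x t = a ∧ ∀ s : Fin n, (s : ℕ) ≤ (t : ℕ) → z' s = z s
          then dmcJoint pX K x z' else 0)
          = if x t = a then pX x * P x * K a (z t) else 0 := by
      intro x
      by_cases hxa : x t = a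
      · simp_rw [hxa, true_and, hiffle]
        rw [if_pos trivial, hzsum1 (insert t T₀) z x, Finset.prod_insert htT₀, hxa]
        ring
      · simp [hxa]
    trans (∑ x : Fin n → α, if x t = a then pX x * P x * K a (z t) else 0)
    · refine Finset.sum_congr rfl fun x _ => ?_
      refine Eq.trans ?_ (hx x)
      exact Finset.sum_congr rfl fun z' _ => by congr
    · rw [hw]
      dsimp only
      rw [Finset.sum_mul]
      refine Finset.sum_congr rfl fun x _ => ?_
      split <;> simp
  -- positivity
  have hDenpos : 0 < ∑ c, w c * K c (z t) := by rw [← hDen]; exact hpos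
  have hKle1 : ∀ c, K c (z t) ≤ 1 := by
    intro c
    rw [← hKrow c]
    exact Finset.single_le_sum (fun b _ => hK0 c b) (Finset.mem_univ _)
  have hDpos : 0 < ∑ c, w c := by
    refine lt_of_lt_of_le hDenpos (Finset.sum_le_sum fun c _ => ?_)
    exact mul_le_of_le_one_right (hw0 c) (hKle1 c)
  have hD0 : (∑ c, w c) ≠ 0 := ne_of_gt hDpos
  have hDen0 : (∑ c, w c * K c (z t)) ≠ 0 := ne_of_gt hDenpos
  -- condDelay values
  have hcd : ∀ b : α, condDelay (zMarg pX K) 1 t z b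
      = (∑ c, w c * K c b) / (∑ c, w c) := by
    intro b
    rw [condDelay, hN b, hD]
  -- the K⁻¹ᵀ term
  have hinv : ∀ c : α, (∑ b, K c b * K⁻¹ b a) = (1 : Matrix α α ℝ) c a := by
    intro c
    rw [← Matrix.mul_apply, Matrix.mul_nonsing_inv K hKdet]
  have hmv : Matrix.mulVec (K⁻¹)ᵀ (condDelay (zMarg pX K) 1 t z) a
      = w a / (∑ c, w c) := by
    simp only [Matrix.mulVec, dotProduct, Matrix.transpose_apply]
    simp_rw [hcd, ← mul_div_assoc]
    rw [← Finset.sum_div]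
    congr 1
    calc (∑ b, K⁻¹ b a * ∑ c, w c * K c b)
        = ∑ b, ∑ c, w c * (K c b * K⁻¹ b a) := by
          refine Finset.sum_congr rfl fun b _ => ?_
          rw [Finset.mul_sum]
          refine Finset.sum_congr rfl fun c _ => ?_
          ring
      _ = ∑ c, w c * ∑ b, K c b * K⁻¹ b a := by
          rw [Finset.sum_comm]
          exact Finset.sum_congr rfl fun c _ => (Finset.mul_sum _ _ _).symm
      _ = ∑ c, w c * (1 : Matrix α α ℝ) c a := by simp_rw [hinv]
      _ = w a := by
          simp_rw [Matrix.one_apply]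
          simp
  -- final arithmetic
  rw [hNum, hDen, hmv, hcd (z t)]
  field_simp
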